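/- Let h : G → G′ be a homomorphism of compact semisimple Lie groups with respective subsets F_G ⊂ L(T) and F_{G′} ⊂ L(T′) realizing the disjoint decompositions Fix(γ) = {e} ⊔ ⊔_{u∈F_G} M_{exp(u)} and Fix(γ′) = {e′} ⊔ ⊔_{u′∈F_{G′}} M′_{exp(u′)}. Then h determines a unique map h° : F_G → F_{G′} ⊔ {0} such that h(M_{exp(u)}) ⊆ M′_{exp(h°(u))} for all u ∈ F_G (where exp(0) = e′). Moreover, if h is the inclusion of a totally geodesic subgroup, then ‖h°(u)‖ = ‖u‖ for all u ∈ F_G. -/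

import Mathlib

open scoped RealInnerProductSpace

/-- The fixed set `Fix(γ) = {g ∈ G | g = g⁻¹}` of the inverse involution `γ(g) = g⁻¹`. -/
def invFixedSet (G : Type) [Group G] : Set G := {g : G | g = g⁻¹}

/-- The adjoint orbit `M_x = {g x g⁻¹ | g ∈ G}` through `x ∈ G`. -/
def adjointOrbit (G : Type) [Group G] (x : G) : Set G := {y : G | ∃ g : G, g * x * g⁻¹ = y}

/-- A compact connected Lie group is *simple* when it is nonabelian and has no nontrivial
proper connected closed normal subgroup. -/
def IsSimpleLieGroup (G : Type) [Group G] [TopologicalSpace G] : Prop :=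
  Subgroup.center G ≠ ⊤ ∧
    ∀ N : Subgroup G, N.Normal → IsClosed (N : Set G) → IsConnected (N : Set G) →
      N = ⊥ ∨ N = ⊤

/-- The data of a compact connected Lie group `G` (compactness, connectedness and the
bi-invariant distance are part of the ambient type classes) with chosen maximal torus `T`:
`V` models the Cartan subalgebra `L(T)` with its `Ad`-invariant inner product, `n` is the rank,
`exp : L(T) → T ⊆ G` is the restriction of the exponential map, `Φ` is the root system of the
paper's Definition 2.1, `sroot` is the system of simple roots relative to a fixed regular point
`x₀`, `w` lists the fundamental dominant weights, and `β` is the maximal short root. -/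
structure CartanData (G : Type) [Group G] [MetricSpace G] [IsTopologicalGroup G]
    [CompactSpace G] [ConnectedSpace G] (n : ℕ) (V : Type) [NormedAddCommGroup V]
    [InnerProductSpace ℝ V] : Type where
  rank_eq : Module.finrank ℝ V = n
  exp : V → G
  exp_add : ∀ u v : V, exp (u + v) = exp u * exp v
  exp_continuous : Continuous exp
  /-- `T = exp (L(T))` is a maximal torus of `G`. -/
  max_torus : ∀ g : G, (∀ v : V, Commute g (exp v)) → g ∈ Set.range exp
  /-- the distance on `G` is bi-invariant -/
  dist_left_invariant : ∀ g a b : G, dist (g * a) (g * b) = dist a b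
  dist_right_invariant : ∀ g a b : G, dist (a * g) (b * g) = dist a b
  /-- the norm of `V = L(T)` computes the Riemannian distance along `T` near `e` -/
  Φ : Finset V
  root_ne_zero : ∀ α ∈ Φ, α ≠ (0 : V)
  root_exp : ∀ α ∈ Φ, exp α = 1
  neg_mem_root : ∀ α ∈ Φ, -α ∈ Φ
  /-- `±α` are the shortest nonzero vectors on the normal line `l_α` with `exp (±α) = e` -/
  root_min : ∀ α ∈ Φ, ∀ t : ℝ, 0 < |t| → |t| < 1 → exp (t • α) ≠ 1
  /-- reflections in root hyperplanes permute the roots -/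
  root_reflection_mem :
    ∀ α ∈ Φ, ∀ γ ∈ Φ, γ - (2 * ⟪γ, α⟫ / ⟪α, α⟫) • α ∈ Φ
  /-- the simple roots `Δ(x₀)` relative to the regular point `x₀` -/
  sroot : Fin n → V
  sroot_mem : ∀ i, sroot i ∈ Φ
  sroot_indep : LinearIndependent ℝ sroot
  /-- every root is a nonnegative or a nonpositive integral combination of simple roots -/
  root_decomp : ∀ α ∈ Φ, (∃ c : Fin n → ℕ, α = ∑ i, (c i : ℝ) • sroot i) ∨
      (∃ c : Fin n → ℕ, α = -∑ i, (c i : ℝ) • sroot i)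
  /-- the fundamental dominant weights: `αⱼ*(ωᵢ) = δᵢⱼ` -/
  w : Fin n → V
  w_dual : ∀ i j, 2 * ⟪w i, sroot j⟫ / ⟪sroot j, sroot j⟫ = if i = j then (1:ℝ) else 0
  /-- the maximal short root -/
  β : V
  β_mem : β ∈ Φ
  β_short : ∀ α ∈ Φ, ‖β‖ ≤ ‖α‖
  β_max : ∀ α ∈ Φ, ‖α‖ = ‖β‖ → ∃ c : Fin n → ℕ, β - α = ∑ i, (c i : ℝ) • sroot i

namespace CartanData

variable {G : Type} [Group G] [MetricSpace G] [IsTopologicalGroup G] [CompactSpace G]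
  [ConnectedSpace G] {n : ℕ} {V : Type} [NormedAddCommGroup V] [InnerProductSpace ℝ V]

variable (D : CartanData G n V)

/-- the closed Weyl chamber `F(x₀)` -/
def chamber : Set V := {u : V | ∀ i, 0 ≤ ⟪u, D.sroot i⟫}

/-- the fundamental Weyl cell `Δ = {u ∈ F(x₀) | β*(u) ≤ 1}` -/
def cell : Set V := {u : V | u ∈ D.chamber ∧ 2 * ⟪u, D.β⟫ / ⟪D.β, D.β⟫ ≤ 1}

/-- the weight lattice `Λ = {x | α*(x) ∈ ℤ for all α ∈ Φ}` -/
def weightLattice : Set V :=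
  {x : V | ∀ α ∈ D.Φ, ∃ k : ℤ, 2 * ⟪x, α⟫ = (k : ℝ) * ⟪α, α⟫}

/-- the unit lattice `Λₑ = exp⁻¹(e)` -/
def unitLattice : Set V := {x : V | D.exp x = 1}

/-- the root lattice `Λᵣ`, the `ℤ`-span of the simple roots -/
def rootLattice : Set V := (Submodule.span ℤ (Set.range D.sroot) : Submodule ℤ V)

/-- `v ≺ u` iff `u - v` is a sum of simple roots -/
def Dominates (u v : V) : Prop := ∃ c : Fin n → ℕ, u - v = ∑ i, (c i : ℝ) • D.sroot i

/-- `Λ⁺ = Λ ∩ F(x₀)` -/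
def dominantWeights : Set V := D.weightLattice ∩ D.chamber

/-- the nonzero minimal weights (the set `Π_G`) -/
def MinimalWeight (x : V) : Prop :=
  x ∈ D.dominantWeights ∧ x ≠ 0 ∧ ∀ y ∈ D.dominantWeights, D.Dominates x y → y = x

/-- the set `K_G = {u ∈ Δ | 2u ∈ Λₑ, d(e, exp u) = ‖u‖}` of (3.1) -/
def KSet : Set V :=
  {u : V | u ∈ D.cell ∧ (2 : ℝ) • u ∈ D.unitLattice ∧ dist (1 : G) (D.exp u) = ‖u‖}

/-- `F` realizes the disjoint decomposition `Fix(γ) = {e} ⊔ ⨆_{u ∈ F} M_{exp u}` -/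
def RealizesDisjointDecomp (F : Set V) : Prop :=
  invFixedSet G = ({1} ∪ ⋃ u ∈ F, adjointOrbit G (D.exp u)) ∧
  (∀ u ∈ F, (1 : G) ∉ adjointOrbit G (D.exp u)) ∧
  ∀ u ∈ F, ∀ v ∈ F, u ≠ v → Disjoint (adjointOrbit G (D.exp u)) (adjointOrbit G (D.exp v))

end CartanData

/-- Corollary 5.2. A homomorphism `h : G → G\'` of compact semisimple Lie
groups determines a unique correspondence `h° : F_G → F_{G\'} ⊔ {0}` with
`h(M_{exp u}) ⊆ M\'_{exp (h° u)}` for all `u ∈ F_G`; if moreover `h` is the inclusion of a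
totally geodesic subgroup (distance preserving), then `‖h°(u)‖ = ‖u‖` on `F_G`. -/
theorem hom_induces_correspondence_on_decompositions
    {G : Type} [Group G] [MetricSpace G] [IsTopologicalGroup G] [CompactSpace G]
    [ConnectedSpace G] {n : ℕ} {V : Type} [NormedAddCommGroup V] [InnerProductSpace ℝ V]
    (D : CartanData G n V) (hss : (Subgroup.center G : Set G).Finite)
    {G' : Type} [Group G'] [MetricSpace G'] [IsTopologicalGroup G'] [CompactSpace G']
    [ConnectedSpace G'] {n' : ℕ} {V' : Type} [NormedAddCommGroup V'] [InnerProductSpace ℝ V']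
    (D' : CartanData G' n' V') (hss' : (Subgroup.center G' : Set G').Finite)
    (h : G →* G') (hcont : Continuous h)
    (F : Set V) (hF : F.Finite) (hFnorm : ∀ u ∈ F, ‖u‖ = dist (1 : G) (D.exp u))
    (hFdec : D.RealizesDisjointDecomp F)
    (F' : Set V') (hF' : F'.Finite) (hF'norm : ∀ u ∈ F', ‖u‖ = dist (1 : G') (D'.exp u))
    (hF'dec : D'.RealizesDisjointDecomp F') :
    ∃ c : V → V',
      ((∀ u ∈ F, c u ∈ F' ∨ c u = 0) ∧
        ∀ u ∈ F, h '' adjointOrbit G (D.exp u) ⊆ adjointOrbit G' (D'.exp (c u))) ∧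
      (∀ c' : V → V',
        ((∀ u ∈ F, c' u ∈ F' ∨ c' u = 0) ∧
          ∀ u ∈ F, h '' adjointOrbit G (D.exp u) ⊆ adjointOrbit G' (D'.exp (c' u))) →
        ∀ u ∈ F, c' u = c u) ∧
      ((Function.Injective h ∧ ∀ a b : G, dist (h a) (h b) = dist a b) →
        ∀ u ∈ F, ‖c u‖ = ‖u‖) := by
  classical
  have hexp0 : D'.exp 0 = 1 := by
    have h00 := D'.exp_add 0 0
    rw [add_zero] at h00
    exact (left_eq_mul.mp h00)
  -- conjugation invariance of distance from 1
  have dconj : ∀ (g x : G'), dist (1 : G') (g * x * g⁻¹) = dist (1 : G') x := by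
    intro g x
    calc dist (1 : G') (g * x * g⁻¹) = dist (g * g⁻¹) (g * (x * g⁻¹)) := by
          rw [mul_inv_cancel, ← mul_assoc]
      _ = dist (g⁻¹) (x * g⁻¹) := D'.dist_left_invariant g _ _
      _ = dist (1 * g⁻¹) (x * g⁻¹) := by rw [one_mul]
      _ = dist (1 : G') x := D'.dist_right_invariant g⁻¹ 1 x
  -- membership propagates
  have key : ∀ (u : V) (v' : V'), h (D.exp u) ∈ adjointOrbit G' (D'.exp v') →
      h '' adjointOrbit G (D.exp u) ⊆ adjointOrbit G' (D'.exp v') := by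
    rintro u v' ⟨g0, hg0⟩ y ⟨x, ⟨g, hg⟩, rfl⟩
    refine ⟨h g * g0, ?_⟩
    rw [← hg, map_mul, map_mul, map_inv, ← hg0]
    group
  have self_mem : ∀ (x : G), x ∈ adjointOrbit G x := by
    intro x; exact ⟨1, by group⟩
  have self_mem' : ∀ (x : G'), x ∈ adjointOrbit G' x := by
    intro x; exact ⟨1, by group⟩
  have orbit_one : ∀ y : G', y ∈ adjointOrbit G' (1 : G') → y = 1 := by
    rintro y ⟨g, hg⟩
    rw [← hg]; group
  -- h (exp u) lies in Fix(γ')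
  have hfix : ∀ u ∈ F, h (D.exp u) ∈ invFixedSet G' := by
    intro u hu
    have h1 : D.exp u ∈ invFixedSet G := by
      rw [hFdec.1]
      exact Or.inr (Set.mem_biUnion hu (self_mem _))
    have h2 : D.exp u = (D.exp u)⁻¹ := h1
    show h (D.exp u) = (h (D.exp u))⁻¹
    rw [← map_inv, ← h2]
  -- the defining property
  set P : V → V' → Prop := fun u v' => h (D.exp u) ∈ adjointOrbit G' (D'.exp v') with hP
  have hPex : ∀ u ∈ F, (∃ v' ∈ F', P u v') ∨ P u 0 := by
    intro u hu
    have := hfix u hu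
    rw [hF'dec.1] at this
    rcases this with h1 | h1
    · right
      rw [hP]
      simp only [Set.mem_singleton_iff] at h1
      rw [h1, hexp0]
      exact self_mem' 1
    · rcases Set.mem_iUnion₂.mp h1 with ⟨v', hv', hmem⟩
      exact Or.inl ⟨v', hv', hmem⟩
  -- define c
  have hc : ∀ u : V, ∃ v' : V', u ∈ F → ((v' ∈ F' ∨ v' = 0) ∧ P u v') := by
    intro u
    by_cases hu : u ∈ F
    · rcases hPex u hu with ⟨v', hv', hPv⟩ | hP0
      · exact ⟨v', fun _ => ⟨Or.inl hv', hPv⟩⟩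
      · exact ⟨0, fun _ => ⟨Or.inr rfl, hP0⟩⟩
    · exact ⟨0, fun h => absurd h hu⟩
  choose c hcspec using hc
  refine ⟨c, ⟨fun u hu => (hcspec u hu).1, fun u hu => key u (c u) (hcspec u hu).2⟩, ?_, ?_⟩
  · -- uniqueness
    rintro c' ⟨hc'mem, hc'sub⟩ u hu
    have hPc' : P u (c' u) := hc'sub u hu ⟨D.exp u, self_mem _, rfl⟩
    have hPc : P u (c u) := (hcspec u hu).2
    rcases hc'mem u hu with hc'F | hc'0
    · rcases (hcspec u hu).1 with hcF | hc0
      · by_contra hne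
        exact Set.disjoint_left.mp (hF'dec.2.2 _ hc'F _ hcF hne) hPc' hPc
      · exfalso
        rw [hP, hc0, hexp0] at hPc
        have h1 : h (D.exp u) = 1 := orbit_one _ hPc
        rw [hP, h1] at hPc'
        exact hF'dec.2.1 _ hc'F hPc'
    · rcases (hcspec u hu).1 with hcF | hc0
      · exfalso
        rw [hP, hc'0, hexp0] at hPc'
        have h1 : h (D.exp u) = 1 := orbit_one _ hPc'
        rw [hP, h1] at hPc
        exact hF'dec.2.1 _ hcF hPc
      · rw [hc'0, hc0]
  · -- isometric inclusion
    rintro ⟨hinj, hiso⟩ u hu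
    have hPc : P u (c u) := (hcspec u hu).2
    have hcF : c u ∈ F' := by
      rcases (hcspec u hu).1 with hcF | hc0
      · exact hcF
      · exfalso
        rw [hP, hc0, hexp0] at hPc
        have h1 : h (D.exp u) = 1 := orbit_one _ hPc
        have h2 : D.exp u = 1 := hinj (by rw [h1, map_one])
        have : (1 : G) ∈ adjointOrbit G (D.exp u) := by rw [h2]; exact self_mem _
        exact hFdec.2.1 u hu this
    rcases hPc with ⟨g0, hg0⟩
    calc ‖c u‖ = dist (1 : G') (D'.exp (c u)) := hF'norm _ hcF
      _ = dist (1 : G') (g0 * D'.exp (c u) * g0⁻¹) := (dconj g0 _).symm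
      _ = dist (1 : G') (h (D.exp u)) := by rw [hg0]
      _ = dist (h 1) (h (D.exp u)) := by rw [map_one]
      _ = dist (1 : G) (D.exp u) := hiso _ _
      _ = ‖u‖ := (hFnorm u hu).symm
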